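/- arXiv:1401.3935 — 6 statements merged into one kernel-verified Lean document; each statement's English description precedes it below -/
import Mathlib

section
/- Let G be a loopless finite connected graph with a bridge e having endpoints v1, v2, with connected components G1, G2 of G minus e (v_i in G_i). If d_i is a v_i-reduced divisor on G_i for i = 1, 2, then the divisor on G given by the pushforward of (d1 − d1(v1)·[v1]) plus the pushforward of (d2 − d2(v2)·[v2]) plus (d1(v1) + d2(v2))·[v1] is a v1-reduced divisor on G. -/
open scoped Classical

namespace BN

/-- A finite multigraph: `E u v` is the number of edges (other than loops)
between distinct vertices `u` and `v`, and `loops v` is the number of loops at `v`. -/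
structure MultiGraph (V : Type) where
  E : V → V → ℕ
  loops : V → ℕ
  symm : ∀ u v, E u v = E v u
  noDiag : ∀ v, E v v = 0

variable {V V1 V2 : Type}

/-- The divisor `[v]`. -/
def one [DecidableEq V] (v : V) : V → ℤ := fun w => if w = v then 1 else 0

/-- Degree of a divisor. -/
def deg [Fintype V] (d : V → ℤ) : ℤ := ∑ v, d v

/-- Effective divisor. -/
def Effective (d : V → ℤ) : Prop := ∀ v, 0 ≤ d v

namespace MultiGraph

/-- Divisor of a rational function (loops contribute nothing). -/
def div [Fintype V] (G : MultiGraph V) (f : V → ℤ) : V → ℤ :=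
  fun v => ∑ w, (G.E v w : ℤ) * (f w - f v)

def Principal [Fintype V] (G : MultiGraph V) (d : V → ℤ) : Prop :=
  ∃ f : V → ℤ, d = G.div f

def LinEquiv [Fintype V] (G : MultiGraph V) (d d' : V → ℤ) : Prop :=
  G.Principal (d' - d)

/-- `d` is linearly equivalent to an effective divisor. -/
def Winnable [Fintype V] (G : MultiGraph V) (d : V → ℤ) : Prop :=
  ∃ e : V → ℤ, Effective e ∧ G.LinEquiv d e

/-- The Baker–Norine rank of a divisor. -/
noncomputable def rank [Fintype V] (G : MultiGraph V) (d : V → ℤ) : ℤ :=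
  if G.Winnable d then
    (sSup {s : ℕ | ∀ e : V → ℤ, Effective e → deg e = (s : ℤ) → G.Winnable (d - e)} : ℕ)
  else -1

def Connected (G : MultiGraph V) : Prop :=
  ∀ u v : V, Relation.ReflTransGen (fun a b => 0 < G.E a b) u v

def Loopless (G : MultiGraph V) : Prop := ∀ v, G.loops v = 0

/-- Number of edges from `v` to vertices outside `A`. -/
def outdeg [Fintype V] [DecidableEq V] (G : MultiGraph V) (A : Finset V) (v : V) : ℕ :=
  ∑ w ∈ Finset.univ.filter (fun w => w ∉ A), G.E v w

/-- `v0`-reduced divisor. -/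
def Reduced [Fintype V] [DecidableEq V] (G : MultiGraph V) (v0 : V) (d : V → ℤ) : Prop :=
  (∀ v, v ≠ v0 → 0 ≤ d v) ∧
  ∀ A : Finset V, A.Nonempty → v0 ∉ A → ∃ v ∈ A, d v < (G.outdeg A v : ℤ)

def valence [Fintype V] (G : MultiGraph V) (v : V) : ℕ :=
  (∑ w, G.E v w) + 2 * G.loops v

/-- Canonical divisor. -/
def K [Fintype V] (G : MultiGraph V) : V → ℤ := fun v => (G.valence v : ℤ) - 2

def edgeCount [Fintype V] (G : MultiGraph V) : ℕ :=
  (∑ v, ∑ w, G.E v w) / 2 + ∑ v, G.loops v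

end MultiGraph

open MultiGraph

/-- The graph obtained by joining `G1` and `G2` by a single bridge from `v1` to `v2`. -/
def bridgeJoin [DecidableEq V1] [DecidableEq V2]
    (G1 : MultiGraph V1) (G2 : MultiGraph V2) (v1 : V1) (v2 : V2) :
    MultiGraph (V1 ⊕ V2) where
  E x y :=
    match x, y with
    | .inl a, .inl b => G1.E a b
    | .inr a, .inr b => G2.E a b
    | .inl a, .inr b => if a = v1 ∧ b = v2 then 1 else 0
    | .inr b, .inl a => if a = v1 ∧ b = v2 then 1 else 0
  loops := Sum.elim G1.loops G2.loops
  symm := by rintro (a | a) (b | b) <;> simp [G1.symm, G2.symm]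
  noDiag := by rintro (a | a) <;> simp [G1.noDiag, G2.noDiag]

/-- The virtual loopless graph `Ḡ•` of a vertex-weighted graph `(G, ω)`:
insert a vertex into each loop of `G` and add `ω v` subdivided loops at each `v`.
The inserted vertices are the pairs `⟨v, i⟩` with `i : Fin (G.loops v + ω v)`,
each joined to `v` by two parallel edges. -/
noncomputable def bullet (G : MultiGraph V) (ω : V → ℕ) :
    MultiGraph (V ⊕ (Σ v : V, Fin (G.loops v + ω v))) where
  E x y :=
    match x, y with
    | .inl u, .inl v => G.E u v
    | .inl u, .inr w => if u = w.1 then 2 else 0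
    | .inr w, .inl u => if u = w.1 then 2 else 0
    | .inr _, .inr _ => 0
  loops := fun _ => 0
  symm := by rintro (u | u) (v | v) <;> simp [G.symm]
  noDiag := by rintro (v | v) <;> simp [G.noDiag]

/-- The rank `r_Ḡ(d)` of a divisor on a vertex-weighted graph `(G, ω)`:
the Baker–Norine rank of `d` on `Ḡ•`. -/
noncomputable def wrank [Fintype V] [DecidableEq V] (G : MultiGraph V) (ω : V → ℕ)
    (d : V → ℤ) : ℤ :=
  (bullet G ω).rank (Sum.elim d 0)

/-- `v` is a base-point of the complete linear system `|d|•` on `Ḡ•`. -/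
def wBasePoint [Fintype V] [DecidableEq V] (G : MultiGraph V) (ω : V → ℕ)
    (d : V → ℤ) (v : V) : Prop :=
  wrank G ω (d - one v) = wrank G ω d

/-- Genus of a vertex-weighted graph. -/
def genus [Fintype V] (G : MultiGraph V) (ω : V → ℕ) : ℤ :=
  (G.edgeCount : ℤ) - Fintype.card V + 1 + ∑ v, (ω v : ℤ)

/-- A vertex-weighted graph of genus `≥ 2` is hyperelliptic if `Ḡ•` carries a
divisor of degree `2` and rank `1`. -/
def Hyperelliptic [Fintype V] [DecidableEq V] (G : MultiGraph V) (ω : V → ℕ) : Prop :=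
  2 ≤ genus G ω ∧ ∃ d, deg d = 2 ∧ (bullet G ω).rank d = 1

/-- The canonical divisor `K_Ḡ` of a vertex-weighted graph, viewed as a divisor on `G`. -/
noncomputable def wK [Fintype V] (G : MultiGraph V) (ω : V → ℕ) : V → ℤ :=
  fun v => (bullet G ω).K (Sum.inl v)

/-- glueing reduced divisors across a bridge. -/
theorem statement_1 {V1 V2 : Type} [Fintype V1] [DecidableEq V1] [Fintype V2] [DecidableEq V2]
    (G1 : MultiGraph V1) (G2 : MultiGraph V2)
    (hl1 : G1.Loopless) (hl2 : G2.Loopless)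
    (hc1 : G1.Connected) (hc2 : G2.Connected)
    (v1 : V1) (v2 : V2) (d1 : V1 → ℤ) (d2 : V2 → ℤ)
    (hd1 : G1.Reduced v1 d1) (hd2 : G2.Reduced v2 d2) :
    (bridgeJoin G1 G2 v1 v2).Reduced (Sum.inl v1)
      (Sum.elim (d1 - d1 v1 • one v1) (d2 - d2 v2 • one v2)
        + (d1 v1 + d2 v2) • one (Sum.inl v1)) := by
  classical
  set G := bridgeJoin G1 G2 v1 v2 with hG
  constructor
  · rintro (w | w) hw
    · have hwv : w ≠ v1 := fun h => hw (by rw [h])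
      simpa [one, hwv] using hd1.1 w hwv
    · by_cases h : w = v2
      · subst h; simp [one]
      · simpa [one, h] using hd2.1 w h
  · intro A hA hv0
    set A1 : Finset V1 := Finset.univ.filter (fun w => Sum.inl w ∈ A) with hA1def
    set A2 : Finset V2 := Finset.univ.filter (fun w => Sum.inr w ∈ A) with hA2def
    have houtl : ∀ v : V1, G1.outdeg A1 v ≤ G.outdeg A (Sum.inl v) := by
      intro v
      rw [MultiGraph.outdeg, MultiGraph.outdeg, Finset.sum_filter, Finset.sum_filter,
        Fintype.sum_sum_type]
      refine le_add_of_le_of_nonneg (le_of_eq ?_) (Nat.zero_le _)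
      refine Finset.sum_congr rfl fun a _ => ?_
      by_cases h : Sum.inl a ∈ A <;> simp [hA1def, h, hG, bridgeJoin]
    have houtr : ∀ v : V2, G2.outdeg A2 v ≤ G.outdeg A (Sum.inr v) := by
      intro v
      rw [MultiGraph.outdeg, MultiGraph.outdeg, Finset.sum_filter, Finset.sum_filter,
        Fintype.sum_sum_type]
      refine le_add_of_nonneg_of_le (Nat.zero_le _) (le_of_eq ?_)
      refine Finset.sum_congr rfl fun a _ => ?_
      by_cases h : Sum.inr a ∈ A <;> simp [hA2def, h, hG, bridgeJoin]
    by_cases hA1 : A1.Nonempty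
    · have hv1A1 : v1 ∉ A1 := by simp [hA1def, hv0]
      obtain ⟨v, hvA1, hlt⟩ := hd1.2 A1 hA1 hv1A1
      have hvne : v ≠ v1 := fun h => hv1A1 (h ▸ hvA1)
      refine ⟨Sum.inl v, by simpa [hA1def] using hvA1, ?_⟩
      have hval : (Sum.elim (d1 - d1 v1 • one v1) (d2 - d2 v2 • one v2)
          + (d1 v1 + d2 v2) • one (Sum.inl v1) : V1 ⊕ V2 → ℤ) (Sum.inl v) = d1 v := by
        simp [one, hvne]
      rw [hval]
      exact lt_of_lt_of_le hlt (by exact_mod_cast houtl v)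
    · -- A1 empty: every element of A is inr
      have hinl : ∀ a : V1, Sum.inl a ∉ A := by
        intro a ha
        exact hA1 ⟨a, by simp [hA1def, ha]⟩
      by_cases hv2 : Sum.inr v2 ∈ A
      · refine ⟨Sum.inr v2, hv2, ?_⟩
        have hval : (Sum.elim (d1 - d1 v1 • one v1) (d2 - d2 v2 • one v2)
            + (d1 v1 + d2 v2) • one (Sum.inl v1) : V1 ⊕ V2 → ℤ) (Sum.inr v2) = 0 := by
          simp [one]
        rw [hval]
        have h1 : 1 ≤ G.outdeg A (Sum.inr v2) := by
          have hmem : Sum.inl v1 ∈ Finset.univ.filter (fun w => w ∉ A) := by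
            simp [hinl v1]
          have hE : G.E (Sum.inr v2) (Sum.inl v1) = 1 := by simp [hG, bridgeJoin]
          calc 1 = G.E (Sum.inr v2) (Sum.inl v1) := hE.symm
            _ ≤ G.outdeg A (Sum.inr v2) :=
              Finset.single_le_sum (fun _ _ => Nat.zero_le _) hmem
        exact_mod_cast h1
      · have hA2 : A2.Nonempty := by
          obtain ⟨x, hx⟩ := hA
          cases x with
          | inl a => exact absurd hx (hinl a)
          | inr b => exact ⟨b, by simp [hA2def, hx]⟩
        have hv2A2 : v2 ∉ A2 := by simp [hA2def, hv2]
        obtain ⟨v, hvA2, hlt⟩ := hd2.2 A2 hA2 hv2A2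
        have hvne : v ≠ v2 := fun h => hv2A2 (h ▸ hvA2)
        refine ⟨Sum.inr v, by simpa [hA2def] using hvA2, ?_⟩
        have hval : (Sum.elim (d1 - d1 v1 • one v1) (d2 - d2 v2 • one v2)
            + (d1 v1 + d2 v2) • one (Sum.inl v1) : V1 ⊕ V2 → ℤ) (Sum.inr v) = d2 v := by
          simp [one, hvne]
        rw [hval]
        exact lt_of_lt_of_le hlt (by exact_mod_cast houtr v)

end BN
end

section
/- For any loopless finite connected graph G, any base vertex v0, and any divisor d on G, there exists a unique v0-reduced divisor d' linearly equivalent to d; moreover the rank r_G(d) is nonnegative if and only if d' is effective. -/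
open scoped Classical

namespace BN

variable {V V1 V2 : Type}

open MultiGraph

set_option linter.unusedSectionVars false
section Aux

variable {V : Type} [Fintype V] [DecidableEq V]

namespace MultiGraph

variable (G : MultiGraph V)

lemma div_add' (f g : V → ℤ) : G.div (fun v => f v + g v) = fun v => G.div f v + G.div g v := by
  funext v
  simp only [div, ← Finset.sum_add_distrib]
  exact Finset.sum_congr rfl fun w _ => by ring

lemma div_neg' (f : V → ℤ) : G.div (fun v => -(f v)) = fun v => -(G.div f v) := by
  funext v
  simp only [div, ← Finset.sum_neg_distrib]
  exact Finset.sum_congr rfl fun w _ => by ring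

lemma div_smul' (c : ℤ) (f : V → ℤ) : G.div (fun v => c * f v) = fun v => c * G.div f v := by
  funext v
  simp only [div, Finset.mul_sum]
  exact Finset.sum_congr rfl fun w _ => by ring

lemma principal_zero : G.Principal 0 := by
  refine ⟨0, ?_⟩
  funext v
  simp [div]

lemma principal_add {a b : V → ℤ} (ha : G.Principal a) (hb : G.Principal b) :
    G.Principal (a + b) := by
  obtain ⟨f, hf⟩ := ha
  obtain ⟨g, hg⟩ := hb
  refine ⟨fun v => f v + g v, ?_⟩
  rw [G.div_add', hf, hg]
  rfl

lemma principal_neg {a : V → ℤ} (ha : G.Principal a) : G.Principal (-a) := by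
  obtain ⟨f, hf⟩ := ha
  refine ⟨fun v => -(f v), ?_⟩
  rw [G.div_neg', hf]
  rfl

lemma linEquiv_refl (d : V → ℤ) : G.LinEquiv d d := by
  simpa [LinEquiv] using G.principal_zero

lemma linEquiv_symm {d e : V → ℤ} (h : G.LinEquiv d e) : G.LinEquiv e d := by
  have := G.principal_neg h
  simpa [LinEquiv] using this

lemma linEquiv_trans {d e f : V → ℤ} (h1 : G.LinEquiv d e) (h2 : G.LinEquiv e f) :
    G.LinEquiv d f := by
  have := G.principal_add h1 h2
  simpa [LinEquiv] using this

/-- symmetry of the Laplacian bilinear form -/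
lemma sum_mul_div (f g : V → ℤ) : ∑ v, f v * G.div g v = ∑ v, g v * G.div f v := by
  have key : ∀ (a b : V → ℤ), ∑ v, ∑ w, (G.E v w : ℤ) * a v * b w
      = ∑ v, ∑ w, (G.E v w : ℤ) * b v * a w := by
    intro a b
    rw [Finset.sum_comm]
    refine Finset.sum_congr rfl fun v _ => Finset.sum_congr rfl fun w _ => ?_
    rw [G.symm w v]
    ring
  have expand : ∀ (a b : V → ℤ), ∑ v, a v * G.div b v
      = (∑ v, ∑ w, (G.E v w : ℤ) * a v * b w) - ∑ v, ∑ w, (G.E v w : ℤ) * a v * b v := by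
    intro a b
    rw [← Finset.sum_sub_distrib]
    refine Finset.sum_congr rfl fun v _ => ?_
    rw [div, Finset.mul_sum, ← Finset.sum_sub_distrib]
    refine Finset.sum_congr rfl fun w _ => by ring
  rw [expand, expand, key f g]
  congr 1
  refine Finset.sum_congr rfl fun v _ => Finset.sum_congr rfl fun w _ => by ring

lemma deg_div (f : V → ℤ) : deg (G.div f) = 0 := by
  have h1 : G.div (fun _ => (1 : ℤ)) = fun _ => 0 := by
    funext v; simp [div]
  have := G.sum_mul_div (fun _ => (1:ℤ)) f
  simp [h1] at this
  simpa [deg] using this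

lemma deg_eq_of_linEquiv {d e : V → ℤ} (h : G.LinEquiv d e) : deg e = deg d := by
  obtain ⟨f, hf⟩ := h
  have : deg (e - d) = 0 := by rw [hf]; exact G.deg_div f
  have h2 : deg (e - d) = deg e - deg d := by
    simp [deg, Finset.sum_sub_distrib]
  omega

end MultiGraph

end Aux
section Aux2
set_option linter.unusedSectionVars false

variable {V : Type} [Fintype V] [DecidableEq V]

namespace MultiGraph

variable (G : MultiGraph V)

/-- integer indicator of a finset -/
def chi (A : Finset V) : V → ℤ := fun v => if v ∈ A then 1 else 0

lemma outdeg_cast (A : Finset V) (v : V) :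
    (G.outdeg A v : ℤ) = ∑ w, if w ∉ A then (G.E v w : ℤ) else 0 := by
  rw [outdeg]
  push_cast
  rw [Finset.sum_filter]

lemma div_chi_mem {A : Finset V} {v : V} (hv : v ∈ A) :
    G.div (chi A) v = -(G.outdeg A v : ℤ) := by
  rw [div, outdeg_cast, ← Finset.sum_neg_distrib]
  refine Finset.sum_congr rfl fun w _ => ?_
  by_cases hw : w ∈ A <;> simp [chi, hv, hw]

lemma div_chi_not_mem {A : Finset V} {v : V} (hv : v ∉ A) :
    0 ≤ G.div (chi A) v := by
  rw [div]
  refine Finset.sum_nonneg fun w _ => ?_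
  have : (0:ℤ) ≤ chi A w := by by_cases hw : w ∈ A <;> simp [chi, hw]
  have h0 : chi A v = 0 := by simp [chi, hv]
  rw [h0, sub_zero]
  exact mul_nonneg (Int.natCast_nonneg _) this

/-- the set of maximizers of `f` -/
def maxA (f : V → ℤ) : Finset V := Finset.univ.filter (fun v => ∀ w, f w ≤ f v)

lemma maxA_nonempty [Nonempty V] (f : V → ℤ) : (maxA f).Nonempty := by
  obtain ⟨v, -, hv⟩ := Finset.exists_max_image Finset.univ f Finset.univ_nonempty
  exact ⟨v, Finset.mem_filter.mpr ⟨Finset.mem_univ v, fun w => hv w (Finset.mem_univ w)⟩⟩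

lemma div_le_neg_outdeg_maxA (f : V → ℤ) {v : V} (hv : v ∈ maxA f) :
    G.div f v ≤ -(G.outdeg (maxA f) v : ℤ) := by
  rw [div, outdeg_cast, ← Finset.sum_neg_distrib]
  refine Finset.sum_le_sum fun w _ => ?_
  by_cases hw : w ∈ maxA f
  · have h1 : f w ≤ f v := (Finset.mem_filter.mp hv).2 w
    have h2 : f v ≤ f w := (Finset.mem_filter.mp hw).2 v
    simp [hw, h1.antisymm h2]
  · have h1 : f w < f v := by
      simp only [maxA, Finset.mem_filter, Finset.mem_univ, true_and, not_forall, not_le] at hw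
      obtain ⟨u, hu⟩ := hw
      exact lt_of_lt_of_le hu ((Finset.mem_filter.mp hv).2 u)
    have h2 : f w - f v ≤ -1 := by omega
    simp only [hw, not_true_eq_false, if_neg, ite_false]
    calc (G.E v w : ℤ) * (f w - f v) ≤ (G.E v w : ℤ) * (-1) :=
          mul_le_mul_of_nonneg_left h2 (Int.natCast_nonneg _)
    _ = -(G.E v w : ℤ) := by ring

end MultiGraph

end Aux2
section Aux3
set_option linter.unusedSectionVars false

variable {V : Type} [Fintype V] [DecidableEq V]

namespace MultiGraph

variable (G : MultiGraph V)

/-- the underlying simple graph -/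
def toSG : SimpleGraph V where
  Adj a b := 0 < G.E a b
  symm := by
    constructor
    intro a b h
    have := G.symm b a
    omega
  loopless := by
    constructor
    intro v h
    have := G.noDiag v
    omega

lemma toSG_connected (hc : G.Connected) (v0 : V) : G.toSG.Connected := by
  have : Nonempty V := ⟨v0⟩
  exact ⟨fun u v => (SimpleGraph.reachable_iff_reflTransGen _ _).mpr (hc u v)⟩

lemma exists_step (hc : G.Connected) (v0 : V) {v : V} (hv : v ≠ v0) :
    ∃ w, 0 < G.E v w ∧ G.toSG.dist v0 w + 1 = G.toSG.dist v0 v := by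
  have hconn := G.toSG_connected hc v0
  have hr : G.toSG.Reachable v v0 := (SimpleGraph.reachable_iff_reflTransGen _ _).mpr (hc v v0)
  obtain ⟨p, hp⟩ := hr.exists_walk_length_eq_dist
  cases p with
  | nil => exact absurd rfl hv
  | @cons _ w _ h q =>
    refine ⟨w, h, ?_⟩
    have h1 : G.toSG.dist w v0 ≤ q.length := SimpleGraph.dist_le q
    have h2 : G.toSG.dist v v0 ≤ G.toSG.dist v w + G.toSG.dist w v0 :=
      hconn.dist_triangle
    have h3 : G.toSG.dist v w ≤ 1 := by
      have := SimpleGraph.dist_le (SimpleGraph.Walk.cons h SimpleGraph.Walk.nil)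
      simpa using this
    have h4 : (SimpleGraph.Walk.cons h q).length = q.length + 1 := by
      simp
    have h5 : G.toSG.dist v0 w = G.toSG.dist w v0 := SimpleGraph.dist_comm
    have h6 : G.toSG.dist v0 v = G.toSG.dist v v0 := SimpleGraph.dist_comm
    omega

/-- exponential weight function -/
noncomputable def wtF (v0 : V) : V → ℤ := fun v =>
  (((∑ a, ∑ b, G.E a b) + 2 : ℕ) : ℤ) ^
    ((Finset.univ.sup fun u => G.toSG.dist v0 u) - G.toSG.dist v0 v)

lemma one_le_wtF (v0 v : V) : 1 ≤ G.wtF v0 v := by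
  apply one_le_pow₀
  exact_mod_cast Nat.le_add_left 1 ((∑ a, ∑ b, G.E a b) + 1)

lemma key_wt (hc : G.Connected) (v0 : V) {v : V} (hv : v ≠ v0) :
    1 ≤ G.div (G.wtF v0) v := by
  obtain ⟨w0, hE, hd⟩ := G.exists_step hc v0 hv
  set M : ℕ := (∑ a, ∑ b, G.E a b) + 2 with hM
  set N : ℕ := Finset.univ.sup fun u => G.toSG.dist v0 u with hN
  set wt : V → ℤ := G.wtF v0 with hwt
  have hsplit : G.div wt v = (∑ w, (G.E v w : ℤ) * wt w) - (∑ w, (G.E v w : ℤ)) * wt v := by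
    rw [div, Finset.sum_mul, ← Finset.sum_sub_distrib]
    exact Finset.sum_congr rfl fun w _ => by ring
  have hwnonneg : ∀ w, (0:ℤ) ≤ (G.E v w : ℤ) * wt w := fun w =>
    mul_nonneg (Int.natCast_nonneg _) (le_trans zero_le_one (G.one_le_wtF v0 w))
  have bound1 : (G.E v w0 : ℤ) * wt w0 ≤ ∑ w, (G.E v w : ℤ) * wt w :=
    Finset.single_le_sum (fun w _ => hwnonneg w) (Finset.mem_univ w0)
  have hNv : G.toSG.dist v0 v ≤ N := Finset.le_sup (Finset.mem_univ v)
  have hexp : N - G.toSG.dist v0 w0 = (N - G.toSG.dist v0 v) + 1 := by omega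
  have hww : wt w0 = (M : ℤ) * wt v := by
    rw [hwt, wtF, wtF, ← hN, ← hM, hexp, pow_succ]
    ring
  have hE1 : (1:ℤ) ≤ (G.E v w0 : ℤ) := by exact_mod_cast hE
  have hsum : (∑ w, (G.E v w : ℤ)) ≤ (M : ℤ) - 2 := by
    have h1 : (∑ w, G.E v w) ≤ ∑ a, ∑ b, G.E a b :=
      Finset.single_le_sum (f := fun a => ∑ b, G.E a b) (fun a _ => Nat.zero_le _)
        (Finset.mem_univ v)
    have h2 : ((∑ w, G.E v w : ℕ) : ℤ) = ∑ w, (G.E v w : ℤ) := by push_cast; rfl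
    rw [← h2]
    have : ((∑ a, ∑ b, G.E a b : ℕ) : ℤ) = (M : ℤ) - 2 := by rw [hM]; push_cast; ring
    rw [← this]
    exact_mod_cast h1
  have hwv : (1:ℤ) ≤ wt v := G.one_le_wtF v0 v
  have hM2 : (2:ℤ) ≤ (M:ℤ) := by
    have : 2 ≤ M := by rw [hM]; omega
    exact_mod_cast this
  have hww0 : (1:ℤ) ≤ wt w0 := G.one_le_wtF v0 w0
  nlinarith [bound1, hsplit, mul_le_mul_of_nonneg_right hsum (le_trans zero_le_one hwv),
    mul_le_mul_of_nonneg_right hE1 (le_trans zero_le_one hww0)]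

end MultiGraph

end Aux3
section Aux4
set_option linter.unusedSectionVars false
set_option maxHeartbeats 1000000

variable {V : Type} [Fintype V] [DecidableEq V]

namespace MultiGraph

variable (G : MultiGraph V)

lemma exists_nonneg_rep (hc : G.Connected) (v0 : V) (d : V → ℤ) :
    ∃ d0, G.LinEquiv d d0 ∧ (∀ v, v ≠ v0 → 0 ≤ d0 v) := by
  set B : ℤ := ∑ v, |d v| with hB
  have hBnn : 0 ≤ B := Finset.sum_nonneg fun v _ => abs_nonneg _
  have hBd : ∀ v, -d v ≤ B := by
    intro v
    have h1 : |d v| ≤ B := Finset.single_le_sum (fun w _ => abs_nonneg (d w)) (Finset.mem_univ v)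
    have h2 := neg_abs_le (d v)
    omega
  refine ⟨fun v => d v + G.div (fun u => B * G.wtF v0 u) v, ⟨fun u => B * G.wtF v0 u, ?_⟩, ?_⟩
  · funext v; simp
  · intro v hv
    have h1 : 1 ≤ G.div (G.wtF v0) v := G.key_wt hc v0 hv
    have hsm := congrFun (G.div_smul' B (G.wtF v0)) v
    have h2 : B ≤ B * G.div (G.wtF v0) v := le_mul_of_one_le_right hBnn h1
    have h3 := hBd v
    simp only [hsm]
    omega

lemma exists_reduced (hc : G.Connected) (v0 : V) (d : V → ℤ) :
    ∃ d', G.Reduced v0 d' ∧ G.LinEquiv d d' := by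
  obtain ⟨d0, hle0, hpos0⟩ := G.exists_nonneg_rep hc v0 d
  set c : ℤ := d0 v0 with hc0
  set wt := G.wtF v0 with hwt
  set T : Set (V → ℤ) := {x | G.LinEquiv d x ∧ (∀ v, v ≠ v0 → 0 ≤ x v) ∧ c ≤ x v0} with hT
  have hd0T : d0 ∈ T := ⟨hle0, hpos0, le_refl _⟩
  set Φ : (V → ℤ) → ℤ := fun x => ∑ v, wt v * x v with hΦ
  set K : ℤ := |deg d| + |c| with hK
  have hxval : ∀ x ∈ T, ∀ v, x v ≤ K := by
    intro x hxT v
    obtain ⟨hx1, hx2, hx3⟩ := hxT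
    have hdeg : ∑ w, x w = deg d := G.deg_eq_of_linEquiv hx1
    have hsplit : x v0 + ∑ w ∈ Finset.univ.erase v0, x w = deg d := by
      rw [← hdeg]; exact Finset.add_sum_erase _ x (Finset.mem_univ v0)
    by_cases hv : v = v0
    · rw [hv]
      have h0 : 0 ≤ ∑ w ∈ Finset.univ.erase v0, x w :=
        Finset.sum_nonneg fun w hw => hx2 w (Finset.ne_of_mem_erase hw)
      have h1 := abs_nonneg c
      have h2 := le_abs_self (deg d)
      omega
    · have hmem : v ∈ Finset.univ.erase v0 := Finset.mem_erase.mpr ⟨hv, Finset.mem_univ v⟩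
      have h1 : x v ≤ ∑ w ∈ Finset.univ.erase v0, x w :=
        Finset.single_le_sum (fun w hw => hx2 w (Finset.ne_of_mem_erase hw)) hmem
      have h2 : c ≤ x v0 := hx3
      have h3 := le_abs_self (deg d)
      have h4 := neg_abs_le c
      omega
  have hwt1 : ∀ v, 1 ≤ wt v := G.one_le_wtF v0
  have hbdd : ∀ x ∈ T, Φ x ≤ ∑ v, wt v * K := fun x hx =>
    Finset.sum_le_sum fun v _ =>
      mul_le_mul_of_nonneg_left (hxval x hx v) (le_trans zero_le_one (hwt1 v))
  obtain ⟨m, ⟨x, hxT, hxm⟩, hmax⟩ :=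
    Int.exists_greatest_of_bdd (P := fun z => ∃ x ∈ T, Φ x = z)
      ⟨∑ v, wt v * K, fun z hz => by obtain ⟨x, hxT, hxz⟩ := hz; exact hxz ▸ hbdd x hxT⟩
      ⟨Φ d0, d0, hd0T, rfl⟩
  refine ⟨x, ⟨⟨hxT.2.1, ?_⟩, hxT.1⟩⟩
  intro A hA hv0A
  by_contra hcon
  push_neg at hcon
  set y : V → ℤ := fun v => x v + G.div (chi A) v with hy
  have hyT : y ∈ T := by
    refine ⟨?_, ?_, ?_⟩
    · refine G.linEquiv_trans hxT.1 ⟨chi A, ?_⟩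
      funext v; simp [hy]
    · intro v hv
      by_cases hvA : v ∈ A
      · have h1 := G.div_chi_mem hvA
        have h2 := hcon v hvA
        simp only [hy]
        omega
      · have h1 := G.div_chi_not_mem (A := A) hvA
        have h2 := hxT.2.1 v hv
        simp only [hy]
        omega
    · have h1 := G.div_chi_not_mem hv0A
      have h2 := hxT.2.2
      simp only [hy]
      omega
  have hstep : Φ x + 1 ≤ Φ y := by
    have h1 : Φ y = Φ x + ∑ v, wt v * G.div (chi A) v := by
      rw [hΦ]
      simp only [hy]
      rw [← Finset.sum_add_distrib]
      exact Finset.sum_congr rfl fun v _ => by ring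
    have h2 : ∑ v, wt v * G.div (chi A) v = ∑ v, chi A v * G.div wt v := G.sum_mul_div _ _
    have h3 : ∑ v, chi A v * G.div wt v = ∑ v ∈ A, G.div wt v := by
      rw [← Fintype.sum_ite_mem A (fun v => G.div wt v)]
      refine Finset.sum_congr rfl fun v _ => ?_
      by_cases hvA : v ∈ A <;> simp [chi, hvA]
    have h4 : (A.card : ℤ) ≤ ∑ v ∈ A, G.div wt v := by
      have : ∀ v ∈ A, (1:ℤ) ≤ G.div wt v := fun v hvA =>
        G.key_wt hc v0 (fun hvv => hv0A (hvv ▸ hvA))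
      calc (A.card : ℤ) = ∑ _v ∈ A, (1:ℤ) := by simp
      _ ≤ ∑ v ∈ A, G.div wt v := Finset.sum_le_sum this
    have h5 : 1 ≤ A.card := Finset.card_pos.mpr hA
    have h6 : (1:ℤ) ≤ (A.card : ℤ) := by exact_mod_cast h5
    omega
  have hle := hmax (Φ y) ⟨y, hyT, rfl⟩
  omega

lemma reduced_unique (hc : G.Connected) (v0 : V) {d1 d2 : V → ℤ}
    (h1 : G.Reduced v0 d1) (h2 : G.Reduced v0 d2) (h : G.LinEquiv d1 d2) : d2 = d1 := by
  have : Nonempty V := ⟨v0⟩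
  obtain ⟨f, hf⟩ := h
  have key : ∀ (e1 e2 g : V → ℤ), G.Reduced v0 e1 → G.Reduced v0 e2 →
      (∀ v, e2 v = e1 v + G.div g v) → v0 ∈ maxA g := by
    intro e1 e2 g he1 he2 hg
    by_contra hv0
    obtain ⟨v, hvA, hvlt⟩ := he1.2 (maxA g) (maxA_nonempty g) hv0
    have hvne : v ≠ v0 := fun hvv => hv0 (hvv ▸ hvA)
    have hd : G.div g v ≤ -(G.outdeg (maxA g) v : ℤ) := G.div_le_neg_outdeg_maxA g hvA
    have h0 : 0 ≤ e2 v := he2.1 v hvne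
    have h5 := hg v
    omega
  have hmax1 : v0 ∈ maxA f := by
    refine key d1 d2 f h1 h2 fun v => ?_
    have h5 := congrFun hf v
    simp only [Pi.sub_apply] at h5
    omega
  have hmax2 : v0 ∈ maxA (fun v => -(f v)) := by
    refine key d2 d1 _ h2 h1 fun v => ?_
    have hdn := congrFun (G.div_neg' f) v
    have h5 := congrFun hf v
    simp only [Pi.sub_apply] at h5
    omega
  have hconst : ∀ v, f v = f v0 := by
    intro v
    have ha : f v ≤ f v0 := (Finset.mem_filter.mp hmax1).2 v
    have hb : -(f v) ≤ -(f v0) := (Finset.mem_filter.mp hmax2).2 v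
    omega
  funext v
  have h5 := congrFun hf v
  simp only [Pi.sub_apply] at h5
  have hz : G.div f v = 0 := by
    rw [div]
    refine Finset.sum_eq_zero fun w _ => ?_
    rw [hconst w, hconst v]; ring
  omega

lemma reduced_effective_of_winnable (v0 : V) {d' : V → ℤ} (hred : G.Reduced v0 d')
    {e : V → ℤ} (he : Effective e) (hle : G.LinEquiv d' e) : Effective d' := by
  have : Nonempty V := ⟨v0⟩
  obtain ⟨f, hf⟩ := hle
  intro v
  by_cases hv : v = v0
  · subst hv
    have hmax : v ∈ maxA f := by
      by_contra hv0
      obtain ⟨u, huA, hult⟩ := hred.2 (maxA f) (maxA_nonempty f) hv0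
      have hd := G.div_le_neg_outdeg_maxA f huA
      have h0 : 0 ≤ e u := he u
      have h5 := congrFun hf u
      simp only [Pi.sub_apply] at h5
      omega
    have hdle : G.div f v ≤ 0 := by
      rw [div]
      refine Finset.sum_nonpos fun w _ => ?_
      have h6 : f w ≤ f v := (Finset.mem_filter.mp hmax).2 w
      have h7 : f w - f v ≤ 0 := by omega
      exact mul_nonpos_of_nonneg_of_nonpos (Int.natCast_nonneg _) h7
    have h5 := congrFun hf v
    simp only [Pi.sub_apply] at h5
    have h8 := he v
    omega
  · exact hred.1 v hv

lemma rank_nonneg_iff (d : V → ℤ) : 0 ≤ G.rank d ↔ G.Winnable d := by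
  rw [rank]
  split_ifs with h
  · exact iff_of_true (Int.natCast_nonneg _) h
  · exact iff_of_false (by omega) h

end MultiGraph

end Aux4
/-- existence and uniqueness of the `v0`-reduced representative,
and effectivity iff the rank is nonnegative. -/
theorem statement_2 {V : Type} [Fintype V] [DecidableEq V]
    (G : MultiGraph V) (hl : G.Loopless) (hc : G.Connected) (v0 : V) (d : V → ℤ) :
    ∃ d' : V → ℤ, (G.Reduced v0 d' ∧ G.LinEquiv d d') ∧
      (∀ d'' : V → ℤ, G.Reduced v0 d'' → G.LinEquiv d d'' → d'' = d') ∧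
      (0 ≤ G.rank d ↔ Effective d') := by
  obtain ⟨d', hred, hle⟩ := G.exists_reduced hc v0 d
  refine ⟨d', ⟨hred, hle⟩, ?_, ?_⟩
  · intro d'' hred'' hle''
    exact G.reduced_unique hc v0 hred hred''
      (G.linEquiv_trans (G.linEquiv_symm hle) hle'')
  · rw [G.rank_nonneg_iff]
    constructor
    · rintro ⟨e, heff, hlee⟩
      exact G.reduced_effective_of_winnable v0 hred heff
        (G.linEquiv_trans (G.linEquiv_symm hle) hlee)
    · intro heff
      exact ⟨d', heff, hle⟩

end BN
end

section
/- Let Ḡ = (G, ω) be a vertex-weighted graph and d a divisor on G. If the weighted rank r_Ḡ(d) ≥ 0 (i.e., the rank of d computed on the virtual loopless graph Ḡ• is ≥ 0), then there exists an effective divisor e ∈ Div(G) linearly equivalent to d in G itself. -/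
open scoped Classical

namespace BN

variable {V V1 V2 : Type}

open MultiGraph

/-- a divisor of nonnegative weighted rank is equivalent to an
effective divisor on `G` itself. -/
theorem statement_3 {V : Type} [Fintype V] [DecidableEq V]
    (G : MultiGraph V) (ω : V → ℕ) (hc : G.Connected) (d : V → ℤ)
    (h : 0 ≤ wrank G ω d) :
    ∃ e : V → ℤ, Effective e ∧ G.LinEquiv d e := by
  have hw : (bullet G ω).Winnable (Sum.elim d 0) := by
    by_contra hnw
    simp only [wrank, MultiGraph.rank, hnw, if_false] at h
    omega
  obtain ⟨eb, heb, f, hf⟩ := hw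
  set g : V → ℤ := fun v => f (Sum.inl v) with hg
  have key : ∀ w : Σ v : V, Fin (G.loops v + ω v),
      0 ≤ 2 * (f (Sum.inl w.1) - f (Sum.inr w)) := by
    intro w
    have h1 := heb (Sum.inr w)
    have h2 := congrFun hf (Sum.inr w)
    simp only [MultiGraph.div, bullet, Fintype.sum_sum_type, Pi.sub_apply, Sum.elim_inr,
      zero_mul, Finset.sum_const_zero, add_zero, sub_zero, Nat.cast_zero, Nat.cast_ite,
      Nat.cast_ofNat, ite_mul, Finset.sum_ite_eq', Finset.mem_univ, if_true,
      Pi.zero_apply] at h2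
    omega
  refine ⟨fun v => d v + G.div g v, ?_, fun v => g v, ?_⟩
  · intro v
    have h1 := heb (Sum.inl v)
    have h2 := congrFun hf (Sum.inl v)
    simp only [MultiGraph.div, bullet, Fintype.sum_sum_type, Pi.sub_apply, Sum.elim_inl] at h2
    have hsum : (eb (Sum.inl v) - d v)
        - ∑ x : V, (G.E v x : ℤ) * (f (Sum.inl x) - f (Sum.inl v)) ≤ 0 := by
      rw [h2, add_sub_cancel_left]
      apply Finset.sum_nonpos
      intro w _
      by_cases hv : v = w.1
      · have hk := key w
        subst hv
        rw [if_pos rfl]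
        push_cast
        linarith
      · rw [if_neg hv]
        simp
    have hdiv : G.div g v = ∑ x : V, (G.E v x : ℤ) * (f (Sum.inl x) - f (Sum.inl v)) := rfl
    show 0 ≤ d v + G.div g v
    rw [hdiv]
    linarith
  · funext v
    simp [MultiGraph.div]

end BN
end

section
/- Let Ḡ = (G, ω) be a vertex-weighted graph with a bridge e with endpoints v1, v2, components G1, G2 as above, d ∈ Div(G) with restrictions d1, d2. Then r_Ḡ(d) ≤ r_Ḡ1(d1 − [v1]) + r_Ḡ2(d2 − [v2]) + 2 if v_i ∉ Bs(|d_i|•) for both i = 1, 2, and r_Ḡ(d) ≤ r_Ḡ1(d1 − [v1]) + r_Ḡ2(d2 − [v2]) + 1 otherwise. -/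
open scoped Classical

namespace BN

variable {V V1 V2 : Type}

open MultiGraph

section Aux

open MultiGraph

variable {V : Type} [Fintype V]

lemma deg_sub (d e : V → ℤ) : deg (d - e) = deg d - deg e := by
  simp [deg, Finset.sum_sub_distrib]

lemma deg_add (d e : V → ℤ) : deg (d + e) = deg d + deg e := by
  simp [deg, Finset.sum_add_distrib]

lemma effective_deg_nonneg {d : V → ℤ} (h : Effective d) : 0 ≤ deg d :=
  Finset.sum_nonneg fun v _ => h v

lemma one_nonneg [DecidableEq V] (v w : V) : 0 ≤ one v w := by
  unfold one; split <;> norm_num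

lemma deg_one [DecidableEq V] (v : V) : deg (one v) = 1 := by
  simp [deg, one]

lemma deg_mul_one [DecidableEq V] (c : ℤ) (v : V) : deg (fun w => c * one v w) = c := by
  simp [deg, one, mul_ite, mul_one, mul_zero]

lemma deg_div (G : MultiGraph V) (f : V → ℤ) : deg (G.div f) = 0 := by
  have key : ∑ v, ∑ w, (G.E v w : ℤ) * f w = ∑ v, ∑ w, (G.E v w : ℤ) * f v := by
    rw [Finset.sum_comm]
    exact Finset.sum_congr rfl fun x _ => Finset.sum_congr rfl fun y _ => by rw [G.symm]
  simp only [deg, MultiGraph.div, mul_sub, Finset.sum_sub_distrib]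
  rw [key, sub_self]

lemma winnable_mono (G : MultiGraph V) {d d' : V → ℤ} (h : G.Winnable d)
    (hle : ∀ v, d v ≤ d' v) : G.Winnable d' := by
  obtain ⟨e, he, f, hf⟩ := h
  exact ⟨e + (d' - d), fun v => add_nonneg (he v) (sub_nonneg.2 (hle v)), f, by rw [← hf]; ring⟩

lemma winnable_deg_nonneg (G : MultiGraph V) {d : V → ℤ} (h : G.Winnable d) : 0 ≤ deg d := by
  obtain ⟨e, he, f, hf⟩ := h
  have h1 : deg (e - d) = 0 := by rw [hf, deg_div]
  have h2 := effective_deg_nonneg he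
  rw [deg_sub] at h1
  omega

/-- The set whose supremum defines the rank. -/
def rset (G : MultiGraph V) (d : V → ℤ) : Set ℕ :=
  {s : ℕ | ∀ e : V → ℤ, Effective e → deg e = (s : ℤ) → G.Winnable (d - e)}

lemma rank_eq_of_winnable {G : MultiGraph V} {d : V → ℤ} (hw : G.Winnable d) :
    G.rank d = ((sSup (rset G d) : ℕ) : ℤ) := by
  simp only [MultiGraph.rank]; rw [if_pos hw]; rfl

lemma rank_eq_of_not_winnable {G : MultiGraph V} {d : V → ℤ} (hw : ¬ G.Winnable d) :
    G.rank d = -1 := by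
  simp only [MultiGraph.rank]; rw [if_neg hw]

lemma zero_mem_rset {G : MultiGraph V} {d : V → ℤ} (hw : G.Winnable d) : 0 ∈ rset G d := by
  intro e' he' hd
  have he'0 : e' = 0 := by
    funext v
    exact (Finset.sum_eq_zero_iff_of_nonneg (fun v _ => he' v)).1 hd v (Finset.mem_univ v)
  simpa [he'0] using hw

lemma bddAbove_rset [Nonempty V] [DecidableEq V] (G : MultiGraph V) (d : V → ℤ) :
    BddAbove (rset G d) := by
  obtain ⟨v0⟩ := (inferInstance : Nonempty V)
  refine ⟨(deg d).toNat, fun s hs => ?_⟩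
  have hwin := hs (fun w => (s : ℤ) * one v0 w)
    (fun w => mul_nonneg (Int.natCast_nonneg s) (one_nonneg v0 w)) (deg_mul_one _ _)
  have h1 := winnable_deg_nonneg G hwin
  rw [deg_sub, deg_mul_one] at h1
  omega

lemma rank_spec [Nonempty V] [DecidableEq V] (G : MultiGraph V) (d e : V → ℤ)
    (he : Effective e) (hle : deg e ≤ G.rank d) : G.Winnable (d - e) := by
  obtain ⟨v0⟩ := (inferInstance : Nonempty V)
  have hdege := effective_deg_nonneg he
  have hw : G.Winnable d := by
    by_contra hw
    rw [rank_eq_of_not_winnable hw] at hle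
    omega
  rw [rank_eq_of_winnable hw] at hle
  have hsup : sSup (rset G d) ∈ rset G d :=
    Nat.sSup_mem ⟨0, zero_mem_rset hw⟩ (bddAbove_rset G d)
  have hwin := hsup (e + fun w => (((sSup (rset G d) : ℕ) : ℤ) - deg e) * one v0 w)
    (fun w => add_nonneg (he w) (mul_nonneg (by omega) (one_nonneg v0 w)))
    (by rw [deg_add, deg_mul_one]; ring)
  refine winnable_mono G hwin fun v => ?_
  simp only [Pi.sub_apply, Pi.add_apply]
  have := mul_nonneg (show (0:ℤ) ≤ ((sSup (rset G d) : ℕ) : ℤ) - deg e by omega) (one_nonneg v0 v)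
  linarith

lemma rank_le_of_cex [Nonempty V] [DecidableEq V] (G : MultiGraph V) {d e : V → ℤ}
    (he : Effective e) (hnw : ¬ G.Winnable (d - e)) : G.rank d ≤ deg e - 1 := by
  by_contra hcon
  push_neg at hcon
  exact hnw (rank_spec G d e he (by omega))

lemma exists_cex [Nonempty V] [DecidableEq V] (G : MultiGraph V) (d : V → ℤ) :
    ∃ e : V → ℤ, Effective e ∧ deg e = G.rank d + 1 ∧ ¬ G.Winnable (d - e) := by
  by_cases hw : G.Winnable d
  · have hnot : sSup (rset G d) + 1 ∉ rset G d := by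
      intro hmem
      have := le_csSup (bddAbove_rset G d) hmem
      omega
    have hnot' : ¬ ∀ e : V → ℤ, Effective e → deg e = ((sSup (rset G d) + 1 : ℕ) : ℤ) →
        G.Winnable (d - e) := hnot
    push_neg at hnot'
    obtain ⟨e, he, hdeg, hnw⟩ := hnot'
    refine ⟨e, he, ?_, hnw⟩
    rw [rank_eq_of_winnable hw]
    push_cast at hdeg ⊢
    omega
  · refine ⟨0, fun v => le_refl 0, by rw [rank_eq_of_not_winnable hw]; simp [deg], by simpa using hw⟩

lemma rank_sub_one_le [Nonempty V] [DecidableEq V] (G : MultiGraph V) (d : V → ℤ) (v : V) :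
    G.rank d ≤ G.rank (d - one v) + 1 := by
  obtain ⟨e, he, hdeg, hnw⟩ := exists_cex G (d - one v)
  have he' : Effective (e + one v) := fun w => add_nonneg (he w) (one_nonneg v w)
  have hnw' : ¬ G.Winnable (d - (e + one v)) := by
    have heq : d - (e + one v) = d - one v - e := by ring
    rw [heq]; exact hnw
  have hb := rank_le_of_cex G he' hnw'
  rw [deg_add, deg_one, hdeg] at hb
  omega

end Aux

section BridgeAux

open MultiGraph

variable {U1 U2 : Type} [Fintype U1] [Fintype U2] [DecidableEq U1] [DecidableEq U2]

lemma deg_elim (e1 : U1 → ℤ) (e2 : U2 → ℤ) : deg (Sum.elim e1 e2) = deg e1 + deg e2 := by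
  simp [deg, Fintype.sum_sum_type]

lemma bridgeJoin_div_inl (W1 : MultiGraph U1) (W2 : MultiGraph U2) (a1 : U1) (a2 : U2)
    (f : U1 ⊕ U2 → ℤ) (w : U1) :
    (bridgeJoin W1 W2 a1 a2).div f (Sum.inl w) =
      W1.div (f ∘ Sum.inl) w + (f (Sum.inr a2) - f (Sum.inl a1)) * one a1 w := by
  simp only [MultiGraph.div, bridgeJoin, Fintype.sum_sum_type, Function.comp_apply]
  by_cases hw : w = a1
  · subst hw
    simp [one]
  · simp [one, hw]

lemma bridgeJoin_div_inr (W1 : MultiGraph U1) (W2 : MultiGraph U2) (a1 : U1) (a2 : U2)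
    (f : U1 ⊕ U2 → ℤ) (w : U2) :
    (bridgeJoin W1 W2 a1 a2).div f (Sum.inr w) =
      W2.div (f ∘ Sum.inr) w - (f (Sum.inr a2) - f (Sum.inl a1)) * one a2 w := by
  simp only [MultiGraph.div, bridgeJoin, Fintype.sum_sum_type, Function.comp_apply]
  by_cases hw : w = a2
  · subst hw
    simp [one]
    ring
  · simp [one, hw]

lemma bridge_split (W1 : MultiGraph U1) (W2 : MultiGraph U2) (a1 : U1) (a2 : U2)
    {D : U1 ⊕ U2 → ℤ} (h : (bridgeJoin W1 W2 a1 a2).Winnable D) :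
    ∃ k : ℤ, W1.Winnable (fun w => D (Sum.inl w) - k * one a1 w) ∧
      W2.Winnable (fun w => D (Sum.inr w) + k * one a2 w) := by
  obtain ⟨e, he, f, hf⟩ := h
  refine ⟨f (Sum.inl a1) - f (Sum.inr a2),
    ⟨fun w => e (Sum.inl w), fun w => he _, f ∘ Sum.inl, funext fun w => ?_⟩,
    ⟨fun w => e (Sum.inr w), fun w => he _, f ∘ Sum.inr, funext fun w => ?_⟩⟩
  · have h1 := congrFun hf (Sum.inl w)
    rw [bridgeJoin_div_inl W1 W2 a1 a2 f w] at h1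
    simp only [Pi.sub_apply] at h1 ⊢
    linarith
  · have h1 := congrFun hf (Sum.inr w)
    rw [bridgeJoin_div_inr W1 W2 a1 a2 f w] at h1
    simp only [Pi.sub_apply] at h1 ⊢
    linarith

lemma bridge_rank_le (W1 : MultiGraph U1) (W2 : MultiGraph U2) (a1 : U1) (a2 : U2)
    (D : U1 ⊕ U2 → ℤ) (c1 c2 : ℤ) (hc1 : 0 ≤ c1) (hc2 : 0 ≤ c2) (hc : c1 + c2 = 1) :
    (bridgeJoin W1 W2 a1 a2).rank D ≤
      W1.rank (fun w => D (Sum.inl w) - c1 * one a1 w) +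
        W2.rank (fun w => D (Sum.inr w) - c2 * one a2 w) + 1 := by
  have hne1 : Nonempty U1 := ⟨a1⟩
  have hne2 : Nonempty U2 := ⟨a2⟩
  have hne : Nonempty (U1 ⊕ U2) := ⟨Sum.inl a1⟩
  obtain ⟨e1, he1, hd1, hn1⟩ := exists_cex W1 (fun w => D (Sum.inl w) - c1 * one a1 w)
  obtain ⟨e2, he2, hd2, hn2⟩ := exists_cex W2 (fun w => D (Sum.inr w) - c2 * one a2 w)
  have heff : Effective (Sum.elim e1 e2) := by rintro (w | w); exacts [he1 w, he2 w]
  have hnw : ¬ (bridgeJoin W1 W2 a1 a2).Winnable (D - Sum.elim e1 e2) := by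
    intro h
    obtain ⟨k, h1, h2⟩ := bridge_split W1 W2 a1 a2 h
    by_cases hk : c1 ≤ k
    · refine hn1 (winnable_mono W1 h1 fun w => ?_)
      simp only [Pi.sub_apply, Sum.elim_inl]
      have h0 := one_nonneg a1 w
      have hm := mul_le_mul_of_nonneg_right hk h0
      linarith
    · refine hn2 (winnable_mono W2 h2 fun w => ?_)
      simp only [Pi.sub_apply, Sum.elim_inr]
      have h0 := one_nonneg a2 w
      push_neg at hk
      have hm := mul_le_mul_of_nonneg_right (show k ≤ -c2 by omega) h0
      linarith
  have hb := rank_le_of_cex (bridgeJoin W1 W2 a1 a2) heff hnw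
  rw [deg_elim, hd1, hd2] at hb
  omega

end BridgeAux

section IsoAux

open MultiGraph

variable {A B : Type} [Fintype A] [Fintype B]

lemma deg_map (ψ : B ≃ A) (e : A → ℤ) : deg (e ∘ ψ) = deg e := by
  simpa [deg, Function.comp] using Equiv.sum_comp ψ e

lemma div_map (G : MultiGraph A) (H : MultiGraph B) (φ : A ≃ B)
    (hE : ∀ a b, H.E (φ a) (φ b) = G.E a b) (g : B → ℤ) (a : A) :
    H.div g (φ a) = G.div (g ∘ φ) a := by
  simp only [MultiGraph.div, Function.comp_apply]
  refine (Fintype.sum_equiv φ _ _ fun u => ?_).symm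
  rw [hE]

lemma winnable_map (G : MultiGraph A) (H : MultiGraph B) (φ : A ≃ B)
    (hE : ∀ a b, H.E (φ a) (φ b) = G.E a b) {d : A → ℤ} (h : G.Winnable d) :
    H.Winnable (d ∘ φ.symm) := by
  obtain ⟨e, he, f, hf⟩ := h
  refine ⟨e ∘ φ.symm, fun b => he _, f ∘ φ.symm, funext fun b => ?_⟩
  have hb := div_map G H φ hE (f ∘ φ.symm) (φ.symm b)
  rw [Equiv.apply_symm_apply] at hb
  have hcomp : (f ∘ φ.symm) ∘ φ = f := by funext a; simp
  rw [hcomp] at hb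
  calc (e ∘ φ.symm - d ∘ φ.symm) b = (e - d) (φ.symm b) := rfl
  _ = G.div f (φ.symm b) := by rw [hf]
  _ = H.div (f ∘ φ.symm) b := hb.symm

lemma rank_map (G : MultiGraph A) (H : MultiGraph B) (φ : A ≃ B)
    (hE : ∀ a b, H.E (φ a) (φ b) = G.E a b) (d : A → ℤ) :
    H.rank (d ∘ φ.symm) = G.rank d := by
  have hE' : ∀ a b, G.E (φ.symm a) (φ.symm b) = H.E a b := by
    intro a b
    rw [← hE (φ.symm a) (φ.symm b), Equiv.apply_symm_apply, Equiv.apply_symm_apply]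
  have hwin : ∀ x : A → ℤ, G.Winnable x ↔ H.Winnable (x ∘ φ.symm) := by
    intro x
    constructor
    · exact winnable_map G H φ hE
    · intro hx
      have h2 := winnable_map H G φ.symm hE' hx
      have hxx : (x ∘ φ.symm) ∘ φ.symm.symm = x := by funext a; simp
      rwa [hxx] at h2
  have hset : rset H (d ∘ φ.symm) = rset G d := by
    ext s
    constructor
    · intro hs e he hdeg
      rw [hwin (d - e)]
      have hws := hs (e ∘ φ.symm) (fun b => he _) (by rw [deg_map]; exact hdeg)
      have heq : d ∘ φ.symm - e ∘ φ.symm = (d - e) ∘ φ.symm := rfl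
      rwa [heq] at hws
    · intro hs e he hdeg
      have he' : Effective (e ∘ φ) := fun a => he _
      have hdeg' : deg (e ∘ φ) = (s : ℤ) := by
        rw [deg_map φ e]; exact hdeg
      have hws := (hwin _).1 (hs (e ∘ φ) he' hdeg')
      have heq : (d - e ∘ φ) ∘ φ.symm = d ∘ φ.symm - e := by
        funext b
        simp [Function.comp]
      rwa [heq] at hws
  by_cases hw : G.Winnable d
  · rw [rank_eq_of_winnable ((hwin d).1 hw), rank_eq_of_winnable hw, hset]
  · rw [rank_eq_of_not_winnable (fun hq => hw ((hwin d).2 hq)), rank_eq_of_not_winnable hw]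

end IsoAux

section Main

open MultiGraph

/-- The natural identification between the virtual loopless graph of a bridge join
and the bridge join of the virtual loopless graphs. -/
def bridgeEquiv {V1 V2 : Type} [DecidableEq V1] [DecidableEq V2]
    (G1 : MultiGraph V1) (G2 : MultiGraph V2) (ω1 : V1 → ℕ) (ω2 : V2 → ℕ)
    (v1 : V1) (v2 : V2) :
    ((V1 ⊕ V2) ⊕ (Σ v : V1 ⊕ V2, Fin ((bridgeJoin G1 G2 v1 v2).loops v + Sum.elim ω1 ω2 v))) ≃
      ((V1 ⊕ (Σ v : V1, Fin (G1.loops v + ω1 v))) ⊕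
        (V2 ⊕ (Σ v : V2, Fin (G2.loops v + ω2 v)))) where
  toFun x :=
    match x with
    | .inl (.inl v) => .inl (.inl v)
    | .inl (.inr v) => .inr (.inl v)
    | .inr ⟨.inl v, i⟩ => .inl (.inr ⟨v, i⟩)
    | .inr ⟨.inr v, i⟩ => .inr (.inr ⟨v, i⟩)
  invFun x :=
    match x with
    | .inl (.inl v) => .inl (.inl v)
    | .inl (.inr ⟨v, i⟩) => .inr ⟨.inl v, i⟩
    | .inr (.inl v) => .inl (.inr v)
    | .inr (.inr ⟨v, i⟩) => .inr ⟨.inr v, i⟩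
  left_inv x := by rcases x with (v | v) | ⟨v | v, i⟩ <;> rfl
  right_inv x := by rcases x with (v | ⟨v, i⟩) | (v | ⟨v, i⟩) <;> rfl

lemma bridgeEquiv_E {V1 V2 : Type} [DecidableEq V1] [DecidableEq V2]
    (G1 : MultiGraph V1) (G2 : MultiGraph V2) (ω1 : V1 → ℕ) (ω2 : V2 → ℕ)
    (v1 : V1) (v2 : V2)
    (a b : (V1 ⊕ V2) ⊕ (Σ v : V1 ⊕ V2, Fin ((bridgeJoin G1 G2 v1 v2).loops v + Sum.elim ω1 ω2 v))) :
    (bridgeJoin (bullet G1 ω1) (bullet G2 ω2) (Sum.inl v1) (Sum.inl v2)).E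
        (bridgeEquiv G1 G2 ω1 ω2 v1 v2 a) (bridgeEquiv G1 G2 ω1 ω2 v1 v2 b) =
      (bullet (bridgeJoin G1 G2 v1 v2) (Sum.elim ω1 ω2)).E a b := by
  rcases a with (x | x) | ⟨x | x, i⟩ <;> rcases b with (y | y) | ⟨y | y, j⟩ <;>
    simp only [bridgeEquiv, Equiv.coe_fn_mk] <;> simp [bullet, bridgeJoin]

end Main

/-- reinterpretation of the bridge inequality. -/
theorem statement_5 {V1 V2 : Type} [Fintype V1] [DecidableEq V1] [Fintype V2] [DecidableEq V2]
    (G1 : MultiGraph V1) (G2 : MultiGraph V2)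
    (hc1 : G1.Connected) (hc2 : G2.Connected)
    (ω1 : V1 → ℕ) (ω2 : V2 → ℕ) (v1 : V1) (v2 : V2) (d : V1 ⊕ V2 → ℤ) :
    wrank (bridgeJoin G1 G2 v1 v2) (Sum.elim ω1 ω2) d ≤
      wrank G1 ω1 (d ∘ Sum.inl - one v1) + wrank G2 ω2 (d ∘ Sum.inr - one v2) +
      (if ¬ wBasePoint G1 ω1 (d ∘ Sum.inl) v1 ∧ ¬ wBasePoint G2 ω2 (d ∘ Sum.inr) v2
        then 2 else 1) := by
  classical
  haveI hne1 : Nonempty (V1 ⊕ (Σ v : V1, Fin (G1.loops v + ω1 v))) := ⟨Sum.inl v1⟩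
  haveI hne2 : Nonempty (V2 ⊕ (Σ v : V2, Fin (G2.loops v + ω2 v))) := ⟨Sum.inl v2⟩
  have hE := bridgeEquiv_E G1 G2 ω1 ω2 v1 v2
  have hwr : wrank (bridgeJoin G1 G2 v1 v2) (Sum.elim ω1 ω2) d
      = (bridgeJoin (bullet G1 ω1) (bullet G2 ω2) (Sum.inl v1) (Sum.inl v2)).rank
          (Sum.elim d 0 ∘ (bridgeEquiv G1 G2 ω1 ω2 v1 v2).symm) :=
    (rank_map _ _ _ hE _).symm
  have h10 : (fun w => (Sum.elim d 0 ∘ (bridgeEquiv G1 G2 ω1 ω2 v1 v2).symm) (Sum.inl w)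
        - (0 : ℤ) * one (Sum.inl v1) w) = Sum.elim (d ∘ Sum.inl) 0 := by
    funext w
    rcases w with x | ⟨x, i⟩ <;> simp [bridgeEquiv, one]
  have h11 : (fun w => (Sum.elim d 0 ∘ (bridgeEquiv G1 G2 ω1 ω2 v1 v2).symm) (Sum.inl w)
        - (1 : ℤ) * one (Sum.inl v1) w) = Sum.elim (d ∘ Sum.inl - one v1) 0 := by
    funext w
    rcases w with x | ⟨x, i⟩ <;> simp [bridgeEquiv, one]
  have h20 : (fun w => (Sum.elim d 0 ∘ (bridgeEquiv G1 G2 ω1 ω2 v1 v2).symm) (Sum.inr w)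
        - (0 : ℤ) * one (Sum.inl v2) w) = Sum.elim (d ∘ Sum.inr) 0 := by
    funext w
    rcases w with x | ⟨x, i⟩ <;> simp [bridgeEquiv, one]
  have h21 : (fun w => (Sum.elim d 0 ∘ (bridgeEquiv G1 G2 ω1 ω2 v1 v2).symm) (Sum.inr w)
        - (1 : ℤ) * one (Sum.inl v2) w) = Sum.elim (d ∘ Sum.inr - one v2) 0 := by
    funext w
    rcases w with x | ⟨x, i⟩ <;> simp [bridgeEquiv, one]
  have key1 := bridge_rank_le (bullet G1 ω1) (bullet G2 ω2) (Sum.inl v1) (Sum.inl v2)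
    (Sum.elim d 0 ∘ (bridgeEquiv G1 G2 ω1 ω2 v1 v2).symm) 0 1 le_rfl zero_le_one (by ring)
  rw [h10, h21] at key1
  have key2 := bridge_rank_le (bullet G1 ω1) (bullet G2 ω2) (Sum.inl v1) (Sum.inl v2)
    (Sum.elim d 0 ∘ (bridgeEquiv G1 G2 ω1 ω2 v1 v2).symm) 1 0 zero_le_one le_rfl (by ring)
  rw [h11, h20] at key2
  have hsub1 : Sum.elim (d ∘ Sum.inl) (0 : (Σ v : V1, Fin (G1.loops v + ω1 v)) → ℤ)
      - one (Sum.inl v1) = Sum.elim (d ∘ Sum.inl - one v1) 0 := by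
    funext w
    rcases w with x | ⟨x, i⟩ <;> simp [one]
  have hsub2 : Sum.elim (d ∘ Sum.inr) (0 : (Σ v : V2, Fin (G2.loops v + ω2 v)) → ℤ)
      - one (Sum.inl v2) = Sum.elim (d ∘ Sum.inr - one v2) 0 := by
    funext w
    rcases w with x | ⟨x, i⟩ <;> simp [one]
  have hmono1 : (bullet G1 ω1).rank (Sum.elim (d ∘ Sum.inl) 0) ≤
      (bullet G1 ω1).rank (Sum.elim (d ∘ Sum.inl - one v1) 0) + 1 := by
    have h := rank_sub_one_le (bullet G1 ω1) (Sum.elim (d ∘ Sum.inl) 0) (Sum.inl v1)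
    rwa [hsub1] at h
  have hmono2 : (bullet G2 ω2).rank (Sum.elim (d ∘ Sum.inr) 0) ≤
      (bullet G2 ω2).rank (Sum.elim (d ∘ Sum.inr - one v2) 0) + 1 := by
    have h := rank_sub_one_le (bullet G2 ω2) (Sum.elim (d ∘ Sum.inr) 0) (Sum.inl v2)
    rwa [hsub2] at h
  have hw1 : wrank G1 ω1 (d ∘ Sum.inl - one v1)
      = (bullet G1 ω1).rank (Sum.elim (d ∘ Sum.inl - one v1) 0) := rfl
  have hw2 : wrank G2 ω2 (d ∘ Sum.inr - one v2)
      = (bullet G2 ω2).rank (Sum.elim (d ∘ Sum.inr - one v2) 0) := rfl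
  rw [hwr, hw1, hw2]
  split_ifs with hif
  · linarith [key1, hmono1]
  · have hor : wBasePoint G1 ω1 (d ∘ Sum.inl) v1 ∨ wBasePoint G2 ω2 (d ∘ Sum.inr) v2 := by
      tauto
    rcases hor with h | h
    · have hb1 : (bullet G1 ω1).rank (Sum.elim (d ∘ Sum.inl - one v1) 0)
          = (bullet G1 ω1).rank (Sum.elim (d ∘ Sum.inl) 0) := h
      linarith [key1]
    · have hb2 : (bullet G2 ω2).rank (Sum.elim (d ∘ Sum.inr - one v2) 0)
          = (bullet G2 ω2).rank (Sum.elim (d ∘ Sum.inr) 0) := h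
      linarith [key2]


end BN
end

section
/- Let G be a loopless finite connected graph, v0 a vertex, and d a v0-reduced divisor on G. If d(v0) < 0 then r_G(d) = −1, i.e., d is not linearly equivalent to any effective divisor. -/
open scoped Classical

namespace BN

variable {V V1 V2 : Type}

open MultiGraph

/-- a `v0`-reduced divisor negative at `v0` has rank `-1`. -/
theorem statement_11 {V : Type} [Fintype V] [DecidableEq V]
    (G : MultiGraph V) (hl : G.Loopless) (hc : G.Connected)
    (v0 : V) (d : V → ℤ) (hred : G.Reduced v0 d) (hneg : d v0 < 0) :
    G.rank d = -1 ∧ ¬ G.Winnable d := by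
  have hW : ¬ G.Winnable d := by
    rintro ⟨e, he, f, hf⟩
    set A : Finset V := Finset.univ.filter (fun v => ∀ w, f w ≤ f v) with hA
    obtain ⟨v, -, hv⟩ := Finset.exists_max_image Finset.univ f ⟨v0, Finset.mem_univ v0⟩
    have hvA : v ∈ A := by
      simp only [hA, Finset.mem_filter, Finset.mem_univ, true_and]
      exact fun w => hv w (Finset.mem_univ w)
    have key : ∀ u ∈ A, G.div f u ≤ -(G.outdeg A u : ℤ) := by
      intro u hu
      have hu' : ∀ w, f w ≤ f u := by
        simpa [hA] using hu
      have h1 : G.div f u ≤ ∑ w, (if w ∉ A then -(G.E u w : ℤ) else 0) := by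
        apply Finset.sum_le_sum
        intro w _
        by_cases hw : w ∈ A
        · simp only [hw, not_true, if_false]
          exact mul_nonpos_of_nonneg_of_nonpos (by positivity) (by linarith [hu' w])
        · simp only [hw, not_false_iff, if_true]
          have hw1 : f w + 1 ≤ f u := by
            have hne : ¬ ∀ x, f x ≤ f w := by simpa [hA] using hw
            push_neg at hne
            obtain ⟨x, hx⟩ := hne
            linarith [hu' x]
          calc (G.E u w : ℤ) * (f w - f u) ≤ (G.E u w : ℤ) * (-1) :=
                mul_le_mul_of_nonneg_left (by linarith) (by positivity)
            _ = -(G.E u w : ℤ) := by ring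
      refine h1.trans_eq ?_
      rw [← Finset.sum_filter, MultiGraph.outdeg]
      push_cast
      rw [Finset.sum_neg_distrib]
    have heq : ∀ u, e u = d u + G.div f u := by
      intro u
      have := congrFun hf u
      simp only [Pi.sub_apply] at this
      linarith
    by_cases hv0 : v0 ∈ A
    · have := key v0 hv0
      have h0 : (0:ℤ) ≤ (G.outdeg A v0 : ℤ) := by positivity
      have := heq v0
      have := he v0
      linarith
    · obtain ⟨u, huA, hu⟩ := hred.2 A ⟨v, hvA⟩ hv0
      have := key u huA
      have := heq u
      have := he u
      linarith
  refine ⟨?_, hW⟩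
  rw [MultiGraph.rank, if_neg hW]

end BN
end

section
/- Let G be a loopless finite connected graph with bridge e (endpoints v1, v2) and components G1, G2 of G ∖ {e}. Suppose h is a divisor on G2 that is v2-reduced with h(v2) = 0, and f is a divisor on G1 that is v1-reduced. Then the divisor j1(f) + j2(h) on G (pushforwards along the vertex inclusions) is v1-reduced. -/
open scoped Classical

namespace BN

variable {V V1 V2 : Type}

open MultiGraph

/-- glueing a `v1`-reduced divisor and a `v2`-reduced divisor
vanishing at `v2` across a bridge gives a `v1`-reduced divisor. -/
theorem statement_12 {V1 V2 : Type} [Fintype V1] [DecidableEq V1] [Fintype V2] [DecidableEq V2]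
    (G1 : MultiGraph V1) (G2 : MultiGraph V2)
    (hl1 : G1.Loopless) (hl2 : G2.Loopless)
    (hc1 : G1.Connected) (hc2 : G2.Connected)
    (v1 : V1) (v2 : V2) (f : V1 → ℤ) (h : V2 → ℤ)
    (hf : G1.Reduced v1 f) (hh : G2.Reduced v2 h) (hv2 : h v2 = 0) :
    (bridgeJoin G1 G2 v1 v2).Reduced (Sum.inl v1) (Sum.elim f h) := by
  classical
  constructor
  · rintro (a | b) hv
    · exact hf.1 a (fun e => hv (by rw [e]))
    · by_cases hb : b = v2
      · simp [hb, hv2]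
      · exact hh.1 b hb
  · intro A hA hv1A
    set A1 : Finset V1 := Finset.univ.filter (fun a => Sum.inl a ∈ A) with hA1def
    set A2 : Finset V2 := Finset.univ.filter (fun b => Sum.inr b ∈ A) with hA2def
    by_cases hv2A : Sum.inr v2 ∈ A
    · refine ⟨Sum.inr v2, hv2A, ?_⟩
      have h1 : 1 ≤ (bridgeJoin G1 G2 v1 v2).outdeg A (Sum.inr v2) := by
        unfold MultiGraph.outdeg
        have hmem : Sum.inl v1 ∈ Finset.univ.filter (fun w => w ∉ A) := by
          simp [hv1A]
        calc 1 = (bridgeJoin G1 G2 v1 v2).E (Sum.inr v2) (Sum.inl v1) := by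
                  simp [bridgeJoin]
          _ ≤ _ := Finset.single_le_sum (fun i _ => Nat.zero_le _) hmem
      have : (0:ℤ) < ((bridgeJoin G1 G2 v1 v2).outdeg A (Sum.inr v2) : ℤ) := by
        exact_mod_cast h1
      simpa [hv2] using this
    · by_cases hA2 : A2.Nonempty
      · obtain ⟨b, hbA2, hb⟩ := hh.2 A2 hA2 (by simp [hA2def, hv2A])
        refine ⟨Sum.inr b, by simpa [hA2def] using hbA2, ?_⟩
        have hle : G2.outdeg A2 b ≤ (bridgeJoin G1 G2 v1 v2).outdeg A (Sum.inr b) := by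
          unfold MultiGraph.outdeg
          have := Finset.sum_le_sum_of_subset (f := (bridgeJoin G1 G2 v1 v2).E (Sum.inr b))
            (s := (Finset.univ.filter (fun w => w ∉ A2)).map
              ⟨Sum.inr, fun x y => by simp⟩)
            (t := Finset.univ.filter (fun w => w ∉ A))
            (by intro x hx
                simp only [Finset.mem_map, Finset.mem_filter, Function.Embedding.coeFn_mk] at hx ⊢
                obtain ⟨w, ⟨_, hw⟩, rfl⟩ := hx
                simp only [hA2def, Finset.mem_filter, Finset.mem_univ, true_and] at hw
                exact ⟨Finset.mem_univ _, hw⟩)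
          rw [Finset.sum_map] at this
          exact this
        calc Sum.elim f h (Sum.inr b) = h b := rfl
          _ < (G2.outdeg A2 b : ℤ) := hb
          _ ≤ _ := by exact_mod_cast hle
      · have hA1 : A1.Nonempty := by
          obtain ⟨x, hx⟩ := hA
          cases x with
          | inl a => exact ⟨a, by simp [hA1def, hx]⟩
          | inr b => exact absurd (by simp [hA2def, hx] : b ∈ A2) (fun hc => hA2 ⟨b, hc⟩)
        obtain ⟨a, haA1, ha⟩ := hf.2 A1 hA1 (by simp [hA1def, hv1A])
        refine ⟨Sum.inl a, by simpa [hA1def] using haA1, ?_⟩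
        have hle : G1.outdeg A1 a ≤ (bridgeJoin G1 G2 v1 v2).outdeg A (Sum.inl a) := by
          unfold MultiGraph.outdeg
          have := Finset.sum_le_sum_of_subset (f := (bridgeJoin G1 G2 v1 v2).E (Sum.inl a))
            (s := (Finset.univ.filter (fun w => w ∉ A1)).map
              ⟨Sum.inl, fun x y => by simp⟩)
            (t := Finset.univ.filter (fun w => w ∉ A))
            (by intro x hx
                simp only [Finset.mem_map, Finset.mem_filter, Function.Embedding.coeFn_mk] at hx ⊢
                obtain ⟨w, ⟨_, hw⟩, rfl⟩ := hx
                simp only [hA1def, Finset.mem_filter, Finset.mem_univ, true_and] at hw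
                exact ⟨Finset.mem_univ _, hw⟩)
          rw [Finset.sum_map] at this
          exact this
        calc Sum.elim f h (Sum.inl a) = f a := rfl
          _ < (G1.outdeg A1 a : ℤ) := ha
          _ ≤ _ := by exact_mod_cast hle


end BN
end
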